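/- Let s ≤ k, let c_1, …, c_k ∈ [0,1] be distinct nodes with weights b_1, …, b_k, and let {P_j}_{j=0}^{s−1} be the shifted Legendre polynomials on [0,1]. Define the k×s matrices P = (P_{j−1}(c_i)) and I = (∫₀^{c_i} P_{j−1}(x) dx) and Ω = diag(b_1, …, b_k). Let g : ℝ^n → ℝ^n be any vector field, y₀ ∈ ℝ^n, h > 0, and let u be a polynomial of degree at most s with u(0) = y₀ and u'(ch) = Σ_{j=0}^{s−1} γ̂_j P_j(c) for c ∈ [0,1], where γ̂_j = Σ_{i=1}^k b_i P_j(c_i) g(u(c_i h)). Then the stage values Y_i := u(c_i h) satisfy the Runge–Kutta stage equations Y_i = y₀ + h Σ_{ℓ=1}^k (I Pᵀ Ω)_{iℓ} g(Y_ℓ) for i = 1, …, k; i.e., the HBVM(k,s) method is the k-stage Runge–Kutta method with coefficient matrix A = I Pᵀ Ω. -/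

import Mathlib

/-- the HBVM(k,s) polynomial `u`, defined by `u(0) = y₀` and
`u'(ch) = Σ_{j<s} γ̂_j P_j(c)` with `γ̂_j = Σᵢ bᵢ P_j(cᵢ) g(u(cᵢh))`, has stage values
`Yᵢ = u(cᵢ h)` satisfying the Runge–Kutta stage equations with coefficient matrix
`A = I Pᵀ Ω`, i.e. `Aᵢₗ = Σ_{j<s} (∫₀^{cᵢ} P_j) P_j(c_ℓ) b_ℓ`. -/
theorem stmt_8 (n s k : ℕ) (hn : 1 ≤ n) (hs : 1 ≤ s) (hsk : s ≤ k)
    (c : Fin k → ℝ) (hc : ∀ i, c i ∈ Set.Icc (0:ℝ) 1) (hcinj : Function.Injective c)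
    (b : Fin k → ℝ)
    (P : ℕ → Polynomial ℝ)
    (hdeg : ∀ j, (P j).degree = j)
    (horth : ∀ i j, (∫ x in (0:ℝ)..1, (P i).eval x * (P j).eval x)
      = if i = j then 1 else 0)
    (g : (Fin n → ℝ) → Fin n → ℝ) (y₀ : Fin n → ℝ) (h : ℝ) (hh : 0 < h)
    (u : ℝ → Fin n → ℝ)
    (hupoly : ∀ i, ∃ Q : Polynomial ℝ, Q.natDegree ≤ s ∧ ∀ t, u t i = Q.eval t)
    (hu0 : u 0 = y₀)
    (γ : ℕ → Fin n → ℝ)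
    (hγ : ∀ j, γ j = ∑ i, (b i * (P j).eval (c i)) • g (u (c i * h)))
    (hu' : ∀ x ∈ Set.Icc (0:ℝ) 1,
      HasDerivAt u (∑ j ∈ Finset.range s, (P j).eval x • γ j) (x * h))
    (A : Matrix (Fin k) (Fin k) ℝ)
    (hA : ∀ i l, A i l = ∑ j ∈ Finset.range s,
      (∫ x in (0:ℝ)..(c i), (P j).eval x) * (P j).eval (c l) * b l) :
    ∀ i, u (c i * h) = y₀ + h • ∑ l, A i l • g (u (c l * h)) := by
  intro i
  set D : ℝ → Fin n → ℝ := fun x => ∑ j ∈ Finset.range s, (P j).eval x • γ j with hD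
  have hco : Continuous D := by
    apply continuous_finset_sum
    intro j _
    exact (Polynomial.continuous _).smul continuous_const
  have hderiv : ∀ x ∈ Set.uIcc (0:ℝ) (c i),
      HasDerivAt (fun x => u (x * h)) (h • D x) x := by
    intro x hx
    have hx' : x ∈ Set.Icc (0:ℝ) 1 := by
      rcases hc i with ⟨h0, h1⟩
      rw [Set.uIcc_of_le h0] at hx
      exact ⟨hx.1, hx.2.trans h1⟩
    have h1 := hu' x hx'
    have h2 : HasDerivAt (fun x : ℝ => x * h) h x := by
      simpa using (hasDerivAt_id x).mul_const h
    exact h1.scomp x h2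
  have hint : IntervalIntegrable (fun x => h • D x) MeasureTheory.volume 0 (c i) :=
    (hco.const_smul h).intervalIntegrable _ _
  have key : (∫ x in (0:ℝ)..(c i), h • D x) = u (c i * h) - y₀ := by
    have := intervalIntegral.integral_eq_sub_of_hasDerivAt hderiv hint
    simpa [hu0] using this
  have hint2 : (∫ x in (0:ℝ)..(c i), h • D x)
      = h • ∑ j ∈ Finset.range s, (∫ x in (0:ℝ)..(c i), (P j).eval x) • γ j := by
    rw [intervalIntegral.integral_smul]
    congr 1
    rw [hD]
    rw [intervalIntegral.integral_finset_sum]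
    · exact Finset.sum_congr rfl fun j _ => intervalIntegral.integral_smul_const _ _
    · intro j _
      exact ((Polynomial.continuous _).smul continuous_const).intervalIntegrable _ _
  have hsum : ∑ j ∈ Finset.range s, (∫ x in (0:ℝ)..(c i), (P j).eval x) • γ j
      = ∑ l, A i l • g (u (c l * h)) := by
    simp only [hγ, Finset.smul_sum, smul_smul]
    rw [Finset.sum_comm]
    refine Finset.sum_congr rfl fun l _ => ?_
    rw [hA, Finset.sum_smul]
    refine Finset.sum_congr rfl fun j _ => ?_
    congr 1
    ring
  have := key.symm
  rw [hint2, hsum] at this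
  have : u (c i * h) - y₀ = h • ∑ l, A i l • g (u (c l * h)) := this
  linear_combination (norm := module) this
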